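/- Let K be a multilinear map V³ → V with values interpreted as a (1,3) curvature-type tensor on a finite-dimensional inner product space, possessing the symmetries of a generalized curvature tensor, and let B be a self-adjoint endomorphism that is K-compatible. If a self-adjoint endomorphism H commutes with B, then the symmetric bilinear form K̊(Y,Z) = Σ_{a,b} ⟨H eₐ, e_b⟩ K(eₐ, Y, Z, e_b) commutes with B: K̊(BY, Z) = K̊(Y, BZ). -/
import Mathlib


open RealInnerProductSpace

/-- If `K` is a generalized curvature tensor, `B` a self-adjoint `K`-compatible
endomorphism, and `H` a self-adjoint endomorphism commuting with `B`, then the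
symmetric bilinear form `K̊(Y,Z) = ∑_{a,b} ⟪H eₐ, e_b⟫ K(eₐ, Y, Z, e_b)` commutes with
`B`: `K̊(BY, Z) = K̊(Y, BZ)`. -/
theorem contraction_commutes_of_compatible
    {V : Type*} [NormedAddCommGroup V] [InnerProductSpace ℝ V] [FiniteDimensional ℝ V]
    (e : OrthonormalBasis (Fin (Module.finrank ℝ V)) ℝ V)
    (K : V →ₗ[ℝ] V →ₗ[ℝ] V →ₗ[ℝ] V →ₗ[ℝ] ℝ)
    (hanti1 : ∀ X Y Z W : V, K X Y Z W = - K Y X Z W)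
    (hanti2 : ∀ X Y Z W : V, K X Y Z W = - K X Y W Z)
    (hpair : ∀ X Y Z W : V, K X Y Z W = K Z W X Y)
    (hbianchi : ∀ X Y Z W : V, K X Y Z W + K Y Z X W + K Z X Y W = 0)
    (B H : V →ₗ[ℝ] V)
    (hB : ∀ X Y : V, ⟪B X, Y⟫ = ⟪X, B Y⟫)
    (hH : ∀ X Y : V, ⟪H X, Y⟫ = ⟪X, H Y⟫)
    (hBH : B ∘ₗ H = H ∘ₗ B)
    (hcompat : ∀ X Y Z W : V, K (B X) Y Z W + K (B Y) Z X W + K (B Z) X Y W = 0) :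
    ∀ Y Z : V,
      (∑ a, ∑ b, ⟪H (e a), e b⟫ * K (e a) (B Y) Z (e b)) =
        ∑ a, ∑ b, ⟪H (e a), e b⟫ * K (e a) Y (B Z) (e b) := by
  intro u v
  have hBH' : ∀ x : V, B (H x) = H (B x) := fun x => LinearMap.congr_fun hBH x
  -- the weight is symmetric
  have hw : ∀ a b, ⟪H (e a), e b⟫ = ⟪H (e b), e a⟫ := fun a b => by
    rw [hH, real_inner_comm]
  -- G := H ∘ B is self-adjoint
  have hG : ∀ X Y : V, ⟪H (B X), Y⟫ = ⟪X, H (B Y)⟫ := fun X Y => by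
    rw [hH, hB, hBH']
  have hGw : ∀ a b, ⟪H (B (e a)), e b⟫ = ⟪H (B (e b)), e a⟫ := fun a b => by
    rw [hG, real_inner_comm]
  -- expansion of the first slot of K in the basis
  have hexp : ∀ (x Y Z W : V), K x Y Z W = ∑ c, ⟪e c, x⟫ * K (e c) Y Z W := by
    intro x Y Z W
    conv_lhs => rw [← e.sum_repr' x]
    simp [LinearMap.sum_apply, smul_eq_mul]
  -- Lemma C: contraction of the symmetric weight against an antisymmetric pair vanishes
  have hC : ∀ X Y : V, (∑ a, ∑ b, ⟪H (e a), e b⟫ * K X Y (e a) (e b)) = 0 := by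
    intro X Y
    have h1 : (∑ a, ∑ b, ⟪H (e a), e b⟫ * K X Y (e a) (e b))
        = ∑ a, ∑ b, -(⟪H (e a), e b⟫ * K X Y (e a) (e b)) := by
      rw [Finset.sum_comm]
      refine Finset.sum_congr rfl fun a _ => Finset.sum_congr rfl fun b _ => ?_
      rw [hw b a, hanti2 X Y (e b) (e a)]
      ring
    simp only [Finset.sum_neg_distrib] at h1
    linarith
  -- Lemma B: contracting B in the first slot against the weight
  have hBcontr : ∀ (Y Z W : V) (b : Fin (Module.finrank ℝ V)),
      (∑ a, ⟪H (e a), e b⟫ * K (B (e a)) Y Z W)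
        = ∑ c, ⟪H (B (e b)), e c⟫ * K (e c) Y Z W := by
    intro Y Z W b
    calc (∑ a, ⟪H (e a), e b⟫ * K (B (e a)) Y Z W)
        = ∑ a, ∑ c, ⟪H (e b), e a⟫ * ⟪e a, B (e c)⟫ * K (e c) Y Z W := by
          refine Finset.sum_congr rfl fun a _ => ?_
          rw [hexp (B (e a)) Y Z W, Finset.mul_sum]
          refine Finset.sum_congr rfl fun c _ => ?_
          have hinner : (⟪e c, B (e a)⟫ : ℝ) = ⟪e a, B (e c)⟫ := by
            rw [real_inner_comm, hB]
          rw [hw a b, hinner]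
          ring
      _ = ∑ c, (∑ a, ⟪H (e b), e a⟫ * ⟪e a, B (e c)⟫) * K (e c) Y Z W := by
          rw [Finset.sum_comm]
          exact Finset.sum_congr rfl fun c _ => by rw [Finset.sum_mul]
      _ = ∑ c, ⟪H (B (e b)), e c⟫ * K (e c) Y Z W := by
          refine Finset.sum_congr rfl fun c _ => ?_
          rw [e.sum_inner_mul_inner (H (e b)) (B (e c)), hH, ← hG]
  -- symmetry of the curvature in the (1,4) vs (2,3) pairs
  have hsym14 : ∀ (a b : Fin (Module.finrank ℝ V)) (Y Z : V),
      K (e a) Y Z (e b) = K (e b) Z Y (e a) := by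
    intro a b Y Z
    rw [hpair (e a) Y Z (e b), hanti1 Z (e b) (e a) Y, hanti2 (e b) Z (e a) Y]
    ring
  -- Lemma A: the G-contracted form is symmetric
  have hA : ∀ Y Z : V,
      (∑ b, ∑ c, ⟪H (B (e b)), e c⟫ * K (e c) Y Z (e b))
        = ∑ b, ∑ c, ⟪H (B (e b)), e c⟫ * K (e c) Z Y (e b) := by
    intro Y Z
    rw [Finset.sum_comm]
    refine Finset.sum_congr rfl fun b _ => Finset.sum_congr rfl fun c _ => ?_
    rw [hGw c b, hsym14 b c Y Z]
  -- the four auxiliary double sums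
  have hS1 : (∑ a, ∑ b, ⟪H (e a), e b⟫ * K (B (e a)) v u (e b))
      = ∑ b, ∑ c, ⟪H (B (e b)), e c⟫ * K (e c) v u (e b) := by
    rw [Finset.sum_comm]
    exact Finset.sum_congr rfl fun b _ => hBcontr v u (e b) b
  have hS3 : (∑ a, ∑ b, ⟪H (e a), e b⟫ * K (B (e b)) u v (e a))
      = ∑ b, ∑ c, ⟪H (B (e b)), e c⟫ * K (e c) u v (e b) := by
    have hswap : (∑ a, ∑ b, ⟪H (e a), e b⟫ * K (B (e b)) u v (e a))
        = ∑ a, ∑ b, ⟪H (e a), e b⟫ * K (B (e a)) u v (e b) := by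
      rw [Finset.sum_comm]
      refine Finset.sum_congr rfl fun a _ => Finset.sum_congr rfl fun b _ => ?_
      rw [hw b a]
    rw [hswap, Finset.sum_comm]
    exact Finset.sum_congr rfl fun b _ => hBcontr u v (e b) b
  have hS13 : (∑ a, ∑ b, ⟪H (e a), e b⟫ * K (B (e a)) v u (e b))
      = ∑ a, ∑ b, ⟪H (e a), e b⟫ * K (B (e b)) u v (e a) := by
    rw [hS1, hS3]; exact hA v u
  have hS2 : (∑ a, ∑ b, ⟪H (e a), e b⟫ * K (B v) u (e a) (e b)) = 0 := hC (B v) u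
  have hS4 : (∑ a, ∑ b, ⟪H (e a), e b⟫ * K (B u) v (e a) (e b)) = 0 := hC (B u) v
  -- pointwise identity from compatibility
  have hpt : ∀ a b : Fin (Module.finrank ℝ V),
      ⟪H (e a), e b⟫ * K (e a) (B u) v (e b)
        = ⟪H (e a), e b⟫ * K (e a) u (B v) (e b)
          + (⟪H (e a), e b⟫ * K (B (e a)) v u (e b)
            + ⟪H (e a), e b⟫ * K (B v) u (e a) (e b)
            - ⟪H (e a), e b⟫ * K (B (e b)) u v (e a)
            + ⟪H (e a), e b⟫ * K (B u) v (e a) (e b)) := by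
    intro a b
    have h1 := hcompat u (e a) v (e b)
    have e1 : K (e a) (B u) v (e b) = - K (B u) (e a) v (e b) :=
      hanti1 (e a) (B u) v (e b)
    have h2 := hcompat v (e b) u (e a)
    have e2 : K (e a) u (B v) (e b) = - K (B v) (e b) u (e a) := by
      rw [hanti1 (e a) u (B v) (e b), hpair u (e a) (B v) (e b)]
    have e3 : K (B u) v (e b) (e a) = - K (B u) v (e a) (e b) :=
      hanti2 (B u) v (e b) (e a)
    have hk : K (e a) (B u) v (e b)
        = K (e a) u (B v) (e b)
          + (K (B (e a)) v u (e b) + K (B v) u (e a) (e b)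
            - K (B (e b)) u v (e a) + K (B u) v (e a) (e b)) := by
      linarith
    rw [hk]; ring
  calc (∑ a, ∑ b, ⟪H (e a), e b⟫ * K (e a) (B u) v (e b))
      = (∑ a, ∑ b, ⟪H (e a), e b⟫ * K (e a) u (B v) (e b))
        + ((∑ a, ∑ b, ⟪H (e a), e b⟫ * K (B (e a)) v u (e b))
          + (∑ a, ∑ b, ⟪H (e a), e b⟫ * K (B v) u (e a) (e b))
          - (∑ a, ∑ b, ⟪H (e a), e b⟫ * K (B (e b)) u v (e a))
          + (∑ a, ∑ b, ⟪H (e a), e b⟫ * K (B u) v (e a) (e b))) := by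
        simp only [← Finset.sum_add_distrib, ← Finset.sum_sub_distrib]
        exact Finset.sum_congr rfl fun a _ => Finset.sum_congr rfl fun b _ => hpt a b
    _ = ∑ a, ∑ b, ⟪H (e a), e b⟫ * K (e a) u (B v) (e b) := by
        rw [hS2, hS4, hS13]; ring
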